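/- Let G be a connected graph on n₀ vertices, 3 | n₀, such that G has no triangle-factor but adding a single edge e (with endpoints in V(G)) yields a graph with a triangle-factor and exactly (4/3)·n₀ − 1 edges. Then exactly three vertices of G lie in no triangle of G. -/

import Mathlib

open SimpleGraph Finset

def IsTriangleFactor {V : Type*} [DecidableEq V] (G : SimpleGraph V) (P : Finset (Finset V)) : Prop :=
  (∀ t ∈ P, G.IsNClique 3 t) ∧ (∀ v : V, ∃! t, t ∈ P ∧ v ∈ t)

private lemma reach_map {V W : Type*} {H : SimpleGraph V} {Q : SimpleGraph W} (f : V → W)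
    (h : ∀ x y, H.Adj x y → Q.Reachable (f x) (f y)) {x y : V} (hr : H.Reachable x y) :
    Q.Reachable (f x) (f y) := by
  obtain ⟨p⟩ := hr
  induction p with
  | nil => exact Reachable.refl _
  | cons ha p ih => exact (h _ _ ha).trans ih

private lemma conn_map {V W : Type*} {H : SimpleGraph V} {Q : SimpleGraph W} (f : V → W)
    (hf : Function.Surjective f) (h : ∀ x y, H.Adj x y → Q.Reachable (f x) (f y))
    (hH : H.Connected) : Q.Connected := by
  obtain ⟨v0⟩ := hH.nonempty
  have hne : Nonempty W := ⟨f v0⟩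
  refine Connected.mk ?_
  intro s t
  obtain ⟨x, rfl⟩ := hf s
  obtain ⟨y, rfl⟩ := hf t
  exact reach_map f h (hH.preconnected x y)

private lemma conn_card {W : Type*} [Fintype W] (Q : SimpleGraph W) [Fintype Q.edgeSet]
    (h : Q.Connected) : Fintype.card W ≤ Q.edgeFinset.card + 1 := by
  classical
  obtain ⟨r⟩ := h.nonempty
  have key : ∀ v : W, ∃ u : W, v ≠ r → Q.Adj v u ∧ Q.dist u r < Q.dist v r := by
    intro v
    by_cases hv : v = r
    · exact ⟨r, fun h' => absurd hv h'⟩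
    · obtain ⟨p, hp⟩ := (h.preconnected v r).exists_walk_length_eq_dist
      cases p with
      | nil => exact absurd rfl hv
      | @cons _ w _ ha q =>
        refine ⟨w, fun _ => ⟨ha, ?_⟩⟩
        have h1 : Q.dist w r ≤ q.length := Q.dist_le q
        simp [Walk.length_cons] at hp
        omega
  choose u hu using key
  have hmaps : ∀ v ∈ ({r}ᶜ : Finset W), s(v, u v) ∈ Q.edgeFinset := by
    intro v hv
    rw [mem_edgeFinset, mem_edgeSet]
    exact ((hu v) (by simpa using hv)).1
  have hinj : Set.InjOn (fun v => s(v, u v)) ({r}ᶜ : Finset W) := by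
    intro v hv w hw hvw
    simp only [Sym2.eq_iff] at hvw
    rcases hvw with ⟨h1, h2⟩ | ⟨h1, h2⟩
    · exact h1
    · exfalso
      have hv' := (hu v (by simpa using hv)).2
      have hw' := (hu w (by simpa using hw)).2
      rw [← h1] at hw'
      rw [h2] at hv'
      omega
  have hle := Finset.card_le_card_of_injOn _ hmaps hinj
  rw [Finset.card_compl, Finset.card_singleton] at hle
  have hne : Nonempty W := ⟨r⟩
  have : 0 < Fintype.card W := Fintype.card_pos
  omega

private lemma card_sym2_offdiag {α : Type*} [DecidableEq α] (s : Finset α) :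
    (s.sym2.filter (fun e => ¬ e.IsDiag)).card + s.card = Nat.choose (s.card + 1) 2 := by
  have h1 : s.sym2.filter (fun e => e.IsDiag) = s.image Sym2.diag := by
    ext e
    induction e with
    | _ x y =>
      simp only [Finset.mem_filter, Finset.mk_mem_sym2_iff, Sym2.mk_isDiag_iff, Finset.mem_image]
      constructor
      · rintro ⟨⟨hx, _⟩, rfl⟩; exact ⟨x, hx, rfl⟩
      · rintro ⟨z, hz, h⟩
        have := Sym2.eq_iff.mp h
        rcases this with ⟨rfl, rfl⟩ | ⟨rfl, rfl⟩ <;> exact ⟨⟨hz, hz⟩, rfl⟩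
  have h2 := Finset.card_filter_add_card_filter_not (s := s.sym2)
    (p := fun e => e.IsDiag)
  rw [h1, Finset.card_image_of_injective _ Sym2.diag_injective] at h2
  rw [← Finset.card_sym2]
  omega

theorem stmt12 {V : Type*} [Fintype V] [DecidableEq V] (G : SimpleGraph V) [DecidableRel G.Adj]
    (n₀ : ℕ) (hn : Fintype.card V = n₀) (h3 : 3 ∣ n₀) (hconn : G.Connected)
    (hnoTF : ¬ ∃ P, IsTriangleFactor G P)
    (a b : V) (hab : a ≠ b) (hnadj : ¬ G.Adj a b)
    (hTF : ∃ P, IsTriangleFactor (G ⊔ SimpleGraph.fromEdgeSet {s(a, b)}) P)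
    (hcount : 3 * (G.edgeFinset.card + 1) + 3 = 4 * n₀) :
    ({v : V | ¬ ∃ t : Finset V, G.IsNClique 3 t ∧ v ∈ t} : Set V).ncard = 3 := by
  classical
  obtain ⟨P, hP1, hP2⟩ := hTF
  set H := G ⊔ SimpleGraph.fromEdgeSet {s(a, b)} with hHdef
  have hGH : G ≤ H := le_sup_left
  have hHadj : ∀ x y : V, H.Adj x y ↔ G.Adj x y ∨ (s(x, y) = s(a, b) ∧ x ≠ y) := by
    intro x y
    simp [hHdef, SimpleGraph.fromEdgeSet_adj]
  have hHab : H.Adj a b := (hHadj a b).mpr (Or.inr ⟨rfl, hab⟩)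
  -- the partition function
  choose f hfP hfv using fun v => (hP2 v).exists
  have hfu : ∀ v t, t ∈ P → v ∈ t → f v = t := fun v t ht hv =>
    ((hP2 v).unique ⟨hfP v, hfv v⟩ ⟨ht, hv⟩)
  have hcard3 : ∀ t ∈ P, t.card = 3 := fun t ht => (hP1 t ht).2
  have hadjP : ∀ t ∈ P, ∀ x ∈ t, ∀ y ∈ t, x ≠ y → H.Adj x y := fun t ht x hx y hy hne =>
    (hP1 t ht).1 hx hy hne
  set k := P.card with hk
  -- n₀ = 3k
  have hunion : P.biUnion id = Finset.univ := by
    ext v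
    simp only [Finset.mem_biUnion, id, Finset.mem_univ, iff_true]
    exact ⟨f v, hfP v, hfv v⟩
  have hdisj : ∀ t1 ∈ P, ∀ t2 ∈ P, t1 ≠ t2 → Disjoint t1 t2 := by
    intro t1 h1 t2 h2 hne
    rw [Finset.disjoint_left]
    intro x hx1 hx2
    exact hne ((hfu x t1 h1 hx1).symm.trans (hfu x t2 h2 hx2))
  have hn3k : n₀ = 3 * k := by
    have hbu := Finset.card_biUnion (s := P) (t := id) (fun t1 h1 t2 h2 hne => hdisj t1 h1 t2 h2 hne)
    rw [hunion, Finset.card_univ, hn] at hbu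
    simp only [id] at hbu
    rw [hbu, Finset.sum_congr rfl (fun t ht => hcard3 t ht), Finset.sum_const, smul_eq_mul,
      mul_comm]
  -- edge count of H
  have hEH : H.edgeFinset.card = G.edgeFinset.card + 1 := by
    have hins : H.edgeFinset = insert s(a, b) G.edgeFinset := by
      ext e
      induction e with
      | _ x y =>
        simp only [SimpleGraph.mem_edgeFinset, SimpleGraph.mem_edgeSet, Finset.mem_insert,
          hHadj]
        constructor
        · rintro (h | ⟨h, _⟩)
          · exact Or.inr h
          · exact Or.inl h
        · rintro (h | h)
          · refine Or.inr ⟨h, ?_⟩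
            rw [Sym2.eq_iff] at h
            rcases h with ⟨rfl, rfl⟩ | ⟨rfl, rfl⟩
            · exact hab
            · exact hab.symm
          · exact Or.inl h
    rw [hins, Finset.card_insert_of_notMem (by simp [hnadj])]
  have hEH4 : H.edgeFinset.card + 1 = 4 * k := by omega
  -- internal edges
  set I := H.edgeFinset.filter (fun e => e ∈ P.biUnion Finset.sym2) with hIdef
  have hIeq : I = P.biUnion (fun t => t.sym2.filter (fun e => ¬ e.IsDiag)) := by
    ext e
    induction e with
    | _ x y =>
      simp only [hIdef, Finset.mem_filter, Finset.mem_biUnion, SimpleGraph.mem_edgeFinset,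
        SimpleGraph.mem_edgeSet, Finset.mk_mem_sym2_iff, Sym2.mk_isDiag_iff]
      constructor
      · rintro ⟨hadj', t, ht, hx, hy⟩
        exact ⟨t, ht, ⟨hx, hy⟩, hadj'.ne⟩
      · rintro ⟨t, ht, ⟨hx, hy⟩, hne⟩
        exact ⟨hadjP t ht x hx y hy hne, t, ht, hx, hy⟩
  have hIt : ∀ t ∈ P, (t.sym2.filter (fun e => ¬ e.IsDiag)).card = 3 := by
    intro t ht
    have h1 := card_sym2_offdiag t
    rw [hcard3 t ht] at h1
    norm_num [Nat.choose] at h1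
    omega
  have hIcard : I.card = 3 * k := by
    rw [hIeq, Finset.card_biUnion]
    · rw [Finset.sum_congr rfl (fun t ht => hIt t ht), Finset.sum_const, smul_eq_mul, mul_comm]
    · intro t1 h1 t2 h2 hne
      rw [Function.onFun, Finset.disjoint_left]
      intro e he1 he2
      rw [Finset.mem_filter, Finset.mem_sym2_iff] at he1 he2
      have hx1 := he1.1 e.out.1 (Sym2.out_fst_mem e)
      have hx2 := he2.1 e.out.1 (Sym2.out_fst_mem e)
      exact (Finset.disjoint_left.mp (hdisj t1 h1 t2 h2 hne)) hx1 hx2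
  -- cross edges
  set X := H.edgeFinset.filter (fun e => e ∉ P.biUnion Finset.sym2) with hXdef
  have hIX : I.card + X.card = H.edgeFinset.card :=
    Finset.card_filter_add_card_filter_not (p := fun e => e ∈ P.biUnion Finset.sym2)
  have hk1 : 1 ≤ k := by
    by_contra hc
    interval_cases k
    omega
  have hXcard : X.card + 1 = k := by omega
  have hcross : ∀ x y : V, H.Adj x y → (s(x, y) ∈ X ↔ f x ≠ f y) := by
    intro x y hxy
    simp only [hXdef, Finset.mem_filter, SimpleGraph.mem_edgeFinset, SimpleGraph.mem_edgeSet,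
      Finset.mem_biUnion]
    constructor
    · rintro ⟨_, hnot⟩ heq
      exact hnot ⟨f x, hfP x, by rw [Finset.mk_mem_sym2_iff]; exact ⟨hfv x, heq ▸ hfv y⟩⟩
    · intro hne
      refine ⟨hxy, ?_⟩
      rintro ⟨t, ht, hmem⟩
      rw [Finset.mk_mem_sym2_iff] at hmem
      exact hne ((hfu x t ht hmem.1).trans (hfu y t ht hmem.2).symm)
  -- quotient graph
  let Q : SimpleGraph {t : Finset V // t ∈ P} :=
    { Adj := fun s t => s ≠ t ∧ ∃ x ∈ (s : Finset V), ∃ y ∈ (t : Finset V), H.Adj x y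
      symm := by
        refine ⟨?_⟩
        rintro s t ⟨hne, x, hx, y, hy, hxy⟩
        exact ⟨hne.symm, y, hy, x, hx, hxy.symm⟩
      loopless := ⟨fun s h => h.1 rfl⟩ }
  let F2 : V → {t : Finset V // t ∈ P} := fun v => ⟨f v, hfP v⟩
  have hF2surj : Function.Surjective F2 := by
    rintro ⟨t, ht⟩
    have hne : t.Nonempty := Finset.card_pos.mp (by rw [hcard3 t ht]; norm_num)
    obtain ⟨x, hx⟩ := hne
    exact ⟨x, Subtype.ext (hfu x t ht hx)⟩
  have hHconn : H.Connected := hconn.mono hGH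
  have hQconn : Q.Connected := by
    refine conn_map F2 hF2surj (fun x y hxy => ?_) hHconn
    by_cases hfe : f x = f y
    · exact (Subtype.ext hfe : F2 x = F2 y) ▸ Reachable.refl _
    · exact SimpleGraph.Adj.reachable
        ⟨fun hc => hfe (congrArg Subtype.val hc), x, hfv x, y, hfv y, hxy⟩
  have hmX : ∀ x y : V, s(x, y) ∈ X → Q.Adj (F2 x) (F2 y) := by
    intro x y hsxy
    have hadj' : H.Adj x y := by
      have := (Finset.mem_filter.mp hsxy).1
      rwa [SimpleGraph.mem_edgeFinset, SimpleGraph.mem_edgeSet] at this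
    have hne := (hcross x y hadj').mp hsxy
    exact ⟨fun hc => hne (congrArg Subtype.val hc), x, hfv x, y, hfv y, hadj'⟩
  have hmaps : ∀ e ∈ X, Sym2.map F2 e ∈ Q.edgeFinset := by
    intro e
    refine Sym2.ind (fun x y he => ?_) e
    rw [Sym2.map_pair_eq, SimpleGraph.mem_edgeFinset, SimpleGraph.mem_edgeSet]
    exact hmX x y he
  have hsurj : ∀ q ∈ Q.edgeFinset, ∃ e ∈ X, Sym2.map F2 e = q := by
    intro q
    refine Sym2.ind (fun s t hq => ?_) q
    rw [SimpleGraph.mem_edgeFinset, SimpleGraph.mem_edgeSet] at hq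
    obtain ⟨hne, x, hx, y, hy, hxy⟩ := hq
    have hfx : f x = s.val := hfu x s.val s.2 hx
    have hfy : f y = t.val := hfu y t.val t.2 hy
    refine ⟨s(x, y), (hcross x y hxy).mpr ?_, ?_⟩
    · rw [hfx, hfy]
      exact fun hc => hne (Subtype.ext hc)
    · rw [Sym2.map_pair_eq, show F2 x = s from Subtype.ext hfx, show F2 y = t from Subtype.ext hfy]
  have hQle : Q.edgeFinset.card ≤ X.card := by
    refine Finset.card_le_card_of_surjOn (Sym2.map F2) ?_
    intro q hq
    obtain ⟨e, he, hmap⟩ := hsurj q hq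
    exact ⟨e, he, hmap⟩
  have hcardW : Fintype.card {t : Finset V // t ∈ P} = k := Fintype.card_coe P
  have hQge : k ≤ Q.edgeFinset.card + 1 := by
    rw [← hcardW]
    exact conn_card Q hQconn
  have hQcard : Q.edgeFinset.card + 1 = k := by omega
  have hinjX : ∀ e1 ∈ X, ∀ e2 ∈ X, Sym2.map F2 e1 = Sym2.map F2 e2 → e1 = e2 := by
    intro e1 he1 e2 he2 heq
    exact Finset.inj_on_of_surj_on_of_card_le (s := X) (t := Q.edgeFinset)
      (fun e _ => Sym2.map F2 e) (fun e he => hmaps e he)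
      (fun q hq => by obtain ⟨e, he, hm⟩ := hsurj q hq; exact ⟨e, he, hm⟩)
      (by omega) he1 he2 heq
  -- deleting any edge of Q disconnects it
  have hdel : ∀ (A B : {t : Finset V // t ∈ P}), Q.Adj A B →
      ¬ (Q.deleteEdges {s(A, B)}).Connected := by
    intro A B hAB hc
    have hmem : s(A, B) ∈ Q.edgeFinset := by
      rw [SimpleGraph.mem_edgeFinset, SimpleGraph.mem_edgeSet]; exact hAB
    have hEq : (Q.deleteEdges {s(A, B)}).edgeFinset = Q.edgeFinset.erase s(A, B) := by
      ext e
      simp [SimpleGraph.edgeSet_deleteEdges, Finset.mem_erase, and_comm]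
    have hle := conn_card _ hc
    rw [hcardW, hEq, Finset.card_erase_of_mem hmem] at hle
    have hpos : 0 < Q.edgeFinset.card := Finset.card_pos.mpr ⟨_, hmem⟩
    omega
  -- a and b lie in the same triangle of the factor
  have hfab : f a = f b := by
    by_contra hne
    have habX : s(a, b) ∈ X := (hcross a b hHab).mpr hne
    have hQab : Q.Adj (F2 a) (F2 b) := hmX a b habX
    refine hdel (F2 a) (F2 b) hQab ?_
    refine conn_map F2 hF2surj (fun x y hxy => ?_) hconn
    have hH' : H.Adj x y := hGH hxy
    by_cases hfe : f x = f y
    · exact (Subtype.ext hfe : F2 x = F2 y) ▸ Reachable.refl _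
    · have hX' : s(x, y) ∈ X := (hcross x y hH').mpr hfe
      have hQxy : Q.Adj (F2 x) (F2 y) := hmX x y hX'
      refine SimpleGraph.Adj.reachable ?_
      rw [SimpleGraph.deleteEdges_adj]
      refine ⟨hQxy, ?_⟩
      simp only [Set.mem_singleton_iff]
      intro hc
      have hmm : Sym2.map F2 s(x, y) = Sym2.map F2 s(a, b) := by
        rw [Sym2.map_pair_eq, Sym2.map_pair_eq]; exact hc
      have h := hinjX _ hX' _ habX hmm
      rw [Sym2.eq_iff] at h
      rcases h with ⟨rfl, rfl⟩ | ⟨rfl, rfl⟩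
      · exact hnadj hxy
      · exact hnadj hxy.symm
  -- every triangle of H is a triangle of the factor
  have pair : ∀ u v w : V, H.Adj u w → H.Adj v w → u ≠ v → f u = f v → f u ≠ f w → False := by
    intro u v w hu hv huv hfeq hfne
    have e1 : s(u, w) ∈ X := (hcross u w hu).mpr hfne
    have e2 : s(v, w) ∈ X := (hcross v w hv).mpr (by rw [← hfeq]; exact hfne)
    have hmm : Sym2.map F2 s(u, w) = Sym2.map F2 s(v, w) := by
      rw [Sym2.map_pair_eq, Sym2.map_pair_eq, show F2 u = F2 v from Subtype.ext hfeq]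
    have h := hinjX _ e1 _ e2 hmm
    rw [Sym2.eq_iff] at h
    rcases h with ⟨h3, _⟩ | ⟨h3, h4⟩
    · exact huv h3
    · exact hfne (congrArg f h3)
  have htri : ∀ s : Finset V, H.IsNClique 3 s → s ∈ P := by
    intro s hs
    obtain ⟨x, y, z, hxy, hxz, hyz, rfl⟩ := Finset.card_eq_three.mp hs.2
    have haxy : H.Adj x y := hs.1 (by simp) (by simp) hxy
    have haxz : H.Adj x z := hs.1 (by simp) (by simp) hxz
    have hayz : H.Adj y z := hs.1 (by simp) (by simp) hyz
    by_cases h1 : f x = f y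
    · by_cases h2 : f x = f z
      · have hsub : ({x, y, z} : Finset V) ⊆ f x := by
          intro v hv
          simp only [Finset.mem_insert, Finset.mem_singleton] at hv
          rcases hv with rfl | rfl | rfl
          · exact hfv v
          · rw [h1]; exact hfv v
          · rw [h2]; exact hfv v
        have heq := Finset.eq_of_subset_of_card_le hsub
          (by rw [hcard3 (f x) (hfP x), hs.2])
        rw [heq]; exact hfP x
      · exact (pair x y z haxz hayz hxy h1 h2).elim
    · by_cases h2 : f x = f z
      · exact (pair x z y haxy hayz.symm hxz h2 h1).elim
      · by_cases h3 : f y = f z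
        · exact (pair y z x haxy.symm haxz.symm hyz h3 (fun hc => h1 hc.symm)).elim
        · -- all different : a triangle in the quotient tree, impossible
          exfalso
          have hQAB : Q.Adj (F2 x) (F2 y) := hmX x y ((hcross x y haxy).mpr h1)
          have hQAC : Q.Adj (F2 x) (F2 z) := hmX x z ((hcross x z haxz).mpr h2)
          have hQBC : Q.Adj (F2 y) (F2 z) := hmX y z ((hcross y z hayz).mpr h3)
          refine hdel (F2 x) (F2 y) hQAB ?_
          refine conn_map id Function.surjective_id (fun s t hst => ?_) hQconn
          show (Q.deleteEdges {s(F2 x, F2 y)}).Reachable s t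
          by_cases hc : s(s, t) = s(F2 x, F2 y)
          · have hACne : s(F2 x, F2 z) ≠ s(F2 x, F2 y) := by
              intro h
              rcases Sym2.eq_iff.mp h with ⟨_, h'⟩ | ⟨h', _⟩
              · exact h3 (congrArg Subtype.val h').symm
              · exact h1 (congrArg Subtype.val h')
            have hBCne : s(F2 z, F2 y) ≠ s(F2 x, F2 y) := by
              intro h
              rcases Sym2.eq_iff.mp h with ⟨h', _⟩ | ⟨_, h'⟩
              · exact h2 (congrArg Subtype.val h').symm
              · exact h1 (congrArg Subtype.val h').symm
            have r1 : (Q.deleteEdges {s(F2 x, F2 y)}).Adj (F2 x) (F2 z) :=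
              SimpleGraph.deleteEdges_adj.mpr ⟨hQAC, by simpa using hACne⟩
            have r2 : (Q.deleteEdges {s(F2 x, F2 y)}).Adj (F2 z) (F2 y) :=
              SimpleGraph.deleteEdges_adj.mpr ⟨hQBC.symm, by simpa using hBCne⟩
            have hreach := r1.reachable.trans r2.reachable
            rcases Sym2.eq_iff.mp hc with ⟨hs', ht'⟩ | ⟨hs', ht'⟩
            · rw [hs', ht']; exact hreach
            · rw [hs', ht']; exact hreach.symm
          · exact (SimpleGraph.deleteEdges_adj.mpr ⟨hst, by simpa using hc⟩).reachable
  -- the set of vertices in no triangle of G is exactly the triangle of a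
  have hset : {v : V | ¬ ∃ t : Finset V, G.IsNClique 3 t ∧ v ∈ t} = ↑(f a) := by
    ext v
    simp only [Set.mem_setOf_eq, Finset.mem_coe]
    constructor
    · intro hv
      by_contra hvT
      apply hv
      refine ⟨f v, ⟨?_, hcard3 _ (hfP v)⟩, hfv v⟩
      intro x hx y hy hne
      have hH' := hadjP (f v) (hfP v) x (Finset.mem_coe.mp hx) y (Finset.mem_coe.mp hy) hne
      rw [hHadj] at hH'
      rcases hH' with h | ⟨heq, _⟩
      · exact h
      · exfalso
        rw [Sym2.eq_iff] at heq
        have haf : a ∈ f v := by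
          rcases heq with ⟨rfl, rfl⟩ | ⟨rfl, rfl⟩
          · exact Finset.mem_coe.mp hx
          · exact Finset.mem_coe.mp hy
        have hfav : f a = f v := hfu a (f v) (hfP v) haf
        apply hvT
        rw [hfav]
        exact hfv v
    · rintro hvT ⟨s, hs, hvs⟩
      have hsP : s ∈ P := htri s ⟨hs.1.mono hGH, hs.2⟩
      have h1 : f v = s := hfu v s hsP hvs
      have h2 : f v = f a := hfu v (f a) (hfP a) hvT
      have has : a ∈ s := by rw [← h1, h2]; exact hfv a
      have hbs : b ∈ s := by rw [← h1, h2, hfab]; exact hfv b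
      exact hnadj (hs.1 (Finset.mem_coe.mpr has) (Finset.mem_coe.mpr hbs) hab)
  rw [hset, Set.ncard_coe_finset, hcard3 _ (hfP a)]
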